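/- Fix a power q of 2. Let AMB be the Gauss-class of order 2 (ideals (a+2bqi) with a, b odd). Then (1/2)·θ(AMB) ∈ Z[[x]], and its reduction mod 2 equals F^{4q²+1}, where F = Σ_{n odd, n>0} x^{n²} in Z/2[[x]]. -/

import Mathlib

open GaussianInt PowerSeries Classical

/-- Gauss-equivalence (level `4q`) on (normalized generators of) ideals of odd norm in
`Z[i]` : `α ~ β` iff `N·α ≡ β (mod 4q)` for some integer `N`. -/
def GaussEq (q : ℕ) (α β : GaussianInt) : Prop :=
  ∃ N : ℤ, ((4 * q : ℤ) : GaussianInt) ∣ ((N : GaussianInt) * α - β)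

/-- `θ(R) = Σ_{I ∈ R} x^{N(I)} ∈ Z[[x]]`, for `R` the Gauss-class of `ρ`.  Ideals of
odd norm correspond bijectively to their generators `a + 2bi` with `a` odd and `a > 0`,
so the coefficient of `x^m` is the number of such generators of norm `m` that are
Gauss-equivalent to `ρ`. -/
noncomputable def thetaG (q : ℕ) (ρ : GaussianInt) : PowerSeries ℤ :=
  PowerSeries.mk fun m =>
    (Nat.card {α : GaussianInt //
      Odd α.re ∧ 0 < α.re ∧ Even α.im ∧ GaussEq q α ρ ∧ α.norm = (m : ℤ)} : ℤ)

/-- `F = Σ_{n odd, n > 0} x^{n²}` in `Z/2[[x]]`. -/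
noncomputable def Fser : PowerSeries (ZMod 2) :=
  PowerSeries.mk fun n => if ∃ k : ℕ, Odd k ∧ 0 < k ∧ n = k ^ 2 then 1 else 0

/-! ### Auxiliary lemmas -/

lemma coeff_sq' (f : PowerSeries (ZMod 2)) (n : ℕ) :
    PowerSeries.coeff n (f ^ 2) = if 2 ∣ n then PowerSeries.coeff (n / 2) f else 0 := by
  rw [pow_two, PowerSeries.coeff_mul]
  by_cases hn : 2 ∣ n
  · obtain ⟨k, rfl⟩ := hn
    rw [if_pos ⟨k, rfl⟩, Nat.mul_div_cancel_left _ (by norm_num)]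
    have hmem : (k, k) ∈ Finset.HasAntidiagonal.antidiagonal (2 * k) := by
      simp [Finset.mem_antidiagonal, two_mul]
    rw [← Finset.add_sum_erase _ _ hmem]
    have h2 : ∀ x : ZMod 2, x * x = x := by decide
    rw [h2]
    have hz : ∑ p ∈ (Finset.HasAntidiagonal.antidiagonal (2*k)).erase (k,k),
        (coeff p.1) f * (coeff p.2) f = 0 := by
      apply Finset.sum_involution (g := fun p _ => (p.2, p.1))
      · intro a _; rw [mul_comm]; exact (by decide : ∀ x : ZMod 2, x + x = 0) _
      · intro a ha _
        simp only [Finset.mem_erase, Finset.HasAntidiagonal.mem_antidiagonal] at ha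
        intro hsw
        apply ha.1
        have : a.2 = a.1 := congrArg Prod.fst hsw
        have h1 : a.1 = k := by omega
        have h2 : a.2 = k := by omega
        exact Prod.ext h1 h2
      · intro a ha
        simp only [Finset.mem_erase, Finset.HasAntidiagonal.mem_antidiagonal] at ha ⊢
        refine ⟨fun h => ha.1 ?_, by omega⟩
        have h1 : a.2 = k := congrArg Prod.fst h
        exact Prod.ext (by omega) h1
      · intro a _; rfl
    rw [hz, add_zero]
  · rw [if_neg hn]
    apply Finset.sum_involution (g := fun p _ => (p.2, p.1))
    · intro a _; rw [mul_comm]; exact (by decide : ∀ x : ZMod 2, x + x = 0) _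
    · intro a ha _
      simp only [Finset.HasAntidiagonal.mem_antidiagonal] at ha
      intro hsw
      have : a.2 = a.1 := congrArg Prod.fst hsw
      exact hn ⟨a.1, by omega⟩
    · intro a ha; simp only [Finset.HasAntidiagonal.mem_antidiagonal] at ha ⊢; omega
    · intro a _; rfl

lemma Fser_pow_pow (k : ℕ) : Fser ^ (2 ^ k) =
    PowerSeries.mk fun n => if ∃ j : ℕ, Odd j ∧ 0 < j ∧ n = 2 ^ k * j ^ 2 then 1 else 0 := by
  induction k with
  | zero => simp [Fser]
  | succ k ih =>
    have h2 : (2:ℕ) ^ (k+1) = 2 ^ k * 2 := by ring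
    rw [h2, pow_mul, ih]
    ext n
    rw [coeff_sq', coeff_mk]
    by_cases hn : 2 ∣ n
    · obtain ⟨t, rfl⟩ := hn
      rw [if_pos ⟨t, rfl⟩, Nat.mul_div_cancel_left _ (by norm_num), coeff_mk]
      congr 1
      apply propext
      constructor
      · rintro ⟨j, hj, hj0, rfl⟩; exact ⟨j, hj, hj0, by ring⟩
      · rintro ⟨j, hj, hj0, hjn⟩
        refine ⟨j, hj, hj0, ?_⟩
        have : 2 ^ k * 2 * j ^ 2 = 2 * (2 ^ k * j ^ 2) := by ring
        omega
    · rw [if_neg hn, coeff_mk, if_neg]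
      rintro ⟨j, hj, hj0, rfl⟩
      exact hn ⟨2 ^ k * j ^ 2, by ring⟩

lemma gaussEq_char (e : ℕ) (q : ℕ) (hq : q = 2 ^ e) (a c : ℤ) (ha : Odd a) :
    GaussEq q ⟨a, 2 * c⟩ ⟨1, 2 * (q : ℤ)⟩ ↔ (2 * (q : ℤ)) ∣ (c - (q : ℤ)) := by
  set Q : ℤ := (q : ℤ) with hQ
  have hkey : ∀ N : ℤ, ((4 * q : ℤ) : GaussianInt) ∣ ((N : GaussianInt) * ⟨a, 2 * c⟩ - ⟨1, 2 * Q⟩)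
      ↔ (4 * Q ∣ N * a - 1 ∧ 2 * Q ∣ N * c - Q) := by
    intro N
    rw [Zsqrtd.intCast_dvd]
    have hre : ((N : GaussianInt) * ⟨a, 2 * c⟩ - ⟨1, 2 * Q⟩).re = N * a - 1 := by
      simp [Zsqrtd.re_mul]
    have him : ((N : GaussianInt) * ⟨a, 2 * c⟩ - ⟨1, 2 * Q⟩).im = 2 * (N * c - Q) := by
      simp [Zsqrtd.im_mul]; ring
    rw [hre, him]
    constructor
    · rintro ⟨h1, h2⟩
      refine ⟨h1, ?_⟩
      have : 2 * (2 * Q) ∣ 2 * (N * c - Q) := by rwa [show (2:ℤ) * (2*Q) = 4*Q by ring]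
      exact (mul_dvd_mul_iff_left (by norm_num : (2:ℤ) ≠ 0)).mp this
    · rintro ⟨h1, h2⟩
      refine ⟨h1, ?_⟩
      rw [show (4:ℤ) * Q = 2 * (2 * Q) by ring]
      exact mul_dvd_mul_left 2 h2
  constructor
  · rintro ⟨N, hN⟩
    rw [hkey] at hN
    obtain ⟨h1, h2⟩ := hN
    have h1' : 2 * Q ∣ N * a - 1 := dvd_trans ⟨2, by ring⟩ h1
    obtain ⟨k, hk⟩ := ha
    have : c - Q = a * (N * c - Q) - c * (N * a - 1) + k * (2 * Q) := by rw [hk]; ring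
    rw [this]
    exact dvd_add (dvd_sub (Dvd.dvd.mul_left h2 a) (Dvd.dvd.mul_left h1' c)) ⟨k, by ring⟩
  · intro hc
    obtain ⟨k, hk⟩ := ha
    have hcop : IsCoprime a (4 * Q) := by
      have h2 : IsCoprime a 2 := ⟨1, -k, by rw [hk]; ring⟩
      have hpow : IsCoprime a (2 ^ (e + 2)) := h2.pow_right
      have h4 : (4 : ℤ) * Q = 2 ^ (e + 2) := by rw [hQ, hq]; push_cast; ring
      rwa [h4]
    obtain ⟨u, v, huv⟩ := hcop
    refine ⟨u, ?_⟩
    rw [hkey]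
    constructor
    · exact ⟨-v, by linarith [huv]⟩
    · have hu : Odd u := by
        rcases Int.even_or_odd u with he | ho
        · exfalso
          obtain ⟨t, ht⟩ := he
          have : (1 : ℤ) = 2 * (t * a + v * 2 * Q) := by rw [← huv, ht, hQ]; ring
          omega
        · exact ho
      obtain ⟨w, hw⟩ := hu
      have : u * c - Q = u * (c - Q) + w * (2 * Q) := by rw [hw]; ring
      rw [this]
      exact dvd_add (Dvd.dvd.mul_left hc u) ⟨w, by ring⟩

lemma mem_S_iff (e : ℕ) (q : ℕ) (hq : q = 2 ^ e) (m : ℕ) (α : GaussianInt) :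
    (Odd α.re ∧ 0 < α.re ∧ Even α.im ∧ GaussEq q α ⟨1, 2 * q⟩ ∧ α.norm = (m : ℤ))
    ↔ (Odd α.re ∧ 0 < α.re ∧ ∃ b : ℤ, Odd b ∧ α.im = 2 * q * b ∧
        α.re ^ 2 + (2 * q) ^ 2 * b ^ 2 = (m : ℤ)) := by
  have hq0 : (0 : ℤ) < q := by rw [hq]; positivity
  have hnorm : α.norm = α.re ^ 2 + α.im ^ 2 := by
    rw [Zsqrtd.norm_def]; ring
  constructor
  · rintro ⟨h1, h2, ⟨c, hc⟩, h4, h5⟩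
    have hc' : α.im = 2 * c := by omega
    have halpha : α = ⟨α.re, 2 * c⟩ := by
      ext <;> simp [hc']
    rw [halpha] at h4
    rw [gaussEq_char e q hq α.re c h1] at h4
    obtain ⟨t, ht⟩ := h4
    refine ⟨h1, h2, 1 + 2 * t, ⟨t, by ring⟩, by linear_combination hc' + 2 * ht, ?_⟩
    rw [← h5, hnorm, hc']
    have hcq : c = q * (1 + 2 * t) := by linear_combination ht
    rw [hcq]; ring
  · rintro ⟨h1, h2, b, hb, h3, h4⟩
    have hceq : α.im = 2 * (q * b) := by rw [h3]; ring
    refine ⟨h1, h2, ⟨q * b, by omega⟩, ?_, ?_⟩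
    · have halpha : α = ⟨α.re, 2 * (q * b)⟩ := by ext <;> simp [hceq]
      rw [halpha, gaussEq_char e q hq α.re (q * b) h1]
      obtain ⟨k, hk⟩ := hb
      exact ⟨k, by rw [hk]; ring⟩
    · rw [hnorm, h3, ← h4]; ring

def mkα (q : ℕ) (ε : Bool) (p : ℕ × ℕ) : GaussianInt :=
  ⟨(p.1 : ℤ), (if ε then 1 else -1) * (2 * q * p.2)⟩

lemma card_S (e : ℕ) (q : ℕ) (hq : q = 2 ^ e) (m : ℕ) :
    Nat.card {α : GaussianInt //
      Odd α.re ∧ 0 < α.re ∧ Even α.im ∧ GaussEq q α ⟨1, 2 * q⟩ ∧ α.norm = (m : ℤ)}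
    = 2 * Nat.card {p : ℕ × ℕ // Odd p.1 ∧ Odd p.2 ∧ p.1 ^ 2 + (2*q) ^ 2 * p.2 ^ 2 = m} := by
  have hq0 : 0 < q := by rw [hq]; positivity
  have key : ∀ (ε : Bool) (p : ℕ × ℕ), (Odd p.1 ∧ Odd p.2 ∧ p.1 ^ 2 + (2*q) ^ 2 * p.2 ^ 2 = m) →
      (Odd (mkα q ε p).re ∧ 0 < (mkα q ε p).re ∧ Even (mkα q ε p).im ∧
       GaussEq q (mkα q ε p) ⟨1, 2 * q⟩ ∧ (mkα q ε p).norm = (m : ℤ)) := by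
    rintro ε ⟨a, b⟩ ⟨ha, hb, habm⟩
    rw [mem_S_iff e q hq]
    have hre : (mkα q ε (a, b)).re = (a : ℤ) := rfl
    have him : (mkα q ε (a, b)).im = (if ε then 1 else -1) * (2 * q * b) := rfl
    refine ⟨by rw [hre]; exact_mod_cast ha, by rw [hre]; exact_mod_cast ha.pos, ?_⟩
    refine ⟨(if ε then 1 else -1) * b, ?_, ?_, ?_⟩
    · cases ε <;> simpa using hb
    · rw [him]; cases ε <;> push_cast <;> ring
    · rw [hre]
      have : ((a : ℤ)) ^ 2 + (2 * q) ^ 2 * ((if ε then 1 else -1) * b) ^ 2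
          = ((a ^ 2 + (2*q) ^ 2 * b ^ 2 : ℕ) : ℤ) := by cases ε <;> simp <;> push_cast <;> ring
      rw [this, habm]
  let f : Bool × {p : ℕ × ℕ // Odd p.1 ∧ Odd p.2 ∧ p.1 ^ 2 + (2*q) ^ 2 * p.2 ^ 2 = m} →
      {α : GaussianInt //
        Odd α.re ∧ 0 < α.re ∧ Even α.im ∧ GaussEq q α ⟨1, 2 * q⟩ ∧ α.norm = (m : ℤ)} :=
    fun x => ⟨mkα q x.1 x.2.1, key x.1 x.2.1 x.2.2⟩
  have hbij : Function.Bijective f := by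
    constructor
    · rintro ⟨ε, ⟨⟨a, b⟩, ha, hb, hab⟩⟩ ⟨ε', ⟨⟨a', b'⟩, ha', hb', hab'⟩⟩ hff
      have h1 : mkα q ε (a, b) = mkα q ε' (a', b') := congrArg Subtype.val hff
      have hre : (a : ℤ) = (a' : ℤ) := congrArg Zsqrtd.re h1
      have him : (if ε then 1 else -1 : ℤ) * (2 * q * b) = (if ε' then 1 else -1) * (2 * q * b') :=
        congrArg Zsqrtd.im h1
      have haa : a = a' := by exact_mod_cast hre
      subst haa
      have hqZ : (0:ℤ) < (q:ℤ) := by exact_mod_cast hq0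
      have hbZ : (0:ℤ) < (b:ℤ) := by exact_mod_cast hb.pos
      have hbZ' : (0:ℤ) < (b':ℤ) := by exact_mod_cast hb'.pos
      have hend : ε = ε' ∧ b = b' := by
        cases ε <;> cases ε' <;> norm_num at him
        · exact ⟨rfl, him.resolve_right (by omega)⟩
        · exfalso; linarith [mul_pos (mul_pos (by norm_num : (0:ℤ)<2) hqZ) hbZ,
            mul_pos (mul_pos (by norm_num : (0:ℤ)<2) hqZ) hbZ']
        · exfalso; linarith [mul_pos (mul_pos (by norm_num : (0:ℤ)<2) hqZ) hbZ,
            mul_pos (mul_pos (by norm_num : (0:ℤ)<2) hqZ) hbZ']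
        · exact ⟨rfl, him.resolve_right (by omega)⟩
      obtain ⟨rfl, rfl⟩ := hend
      rfl
    · rintro ⟨α, hα⟩
      obtain ⟨h1, h2, b, hb, him, hnorm⟩ := (mem_S_iff e q hq m α).mp hα
      have hb0 : b ≠ 0 := by rintro rfl; exact (by norm_num : ¬ Odd (0:ℤ)) hb
      refine ⟨⟨decide (0 < b), ⟨(α.re.toNat, b.natAbs), ?_, ?_, ?_⟩⟩, ?_⟩
      · rwa [← Int.odd_coe_nat, Int.toNat_of_nonneg h2.le]
      · exact Int.natAbs_odd.mpr hb
      · have : ((α.re.toNat ^ 2 + (2*q) ^ 2 * b.natAbs ^ 2 : ℕ) : ℤ) = (m : ℤ) := by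
          push_cast [Int.toNat_of_nonneg h2.le]
          rw [sq_abs]; exact hnorm
        exact_mod_cast this
      · apply Subtype.ext
        show mkα q (decide (0 < b)) (α.re.toNat, b.natAbs) = α
        have hre : ((α.re.toNat : ℤ)) = α.re := Int.toNat_of_nonneg h2.le
        ext
        · exact hre
        · show (if decide (0 < b) then 1 else -1 : ℤ) * (2 * q * b.natAbs) = α.im
          rcases lt_or_gt_of_ne hb0 with hneg | hpos
          · rw [if_neg (by simp [not_lt.mpr hneg.le]), him]
            rw [← Int.natAbs_neg, Int.natAbs_of_nonneg (by omega)]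
            ring
          · rw [if_pos (by simp [hpos]), him, Int.natAbs_of_nonneg hpos.le]
            ring
  have hcard := Nat.card_congr (Equiv.ofBijective f hbij)
  rw [Nat.card_prod, Nat.card_eq_fintype_card, Fintype.card_bool] at hcard
  omega

/-- `AMB` is the Gauss-class of `1 + 2q·i` (the unique class of order 2, whose ideals
are the `(a + 2bqi)` with `a, b` odd).  Then `(1/2)·θ(AMB)` lies in `Z[[x]]` and its
mod 2 reduction is `F^{4q²+1}`. -/
theorem stmt16 (e : ℕ) (q : ℕ) (hq : q = 2 ^ e) :
    ∃ h : PowerSeries ℤ, 2 * h = thetaG q ⟨1, 2 * q⟩ ∧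
      PowerSeries.map (Int.castRingHom (ZMod 2)) h = Fser ^ (4 * q ^ 2 + 1) := by
  refine ⟨PowerSeries.mk fun m =>
    (Nat.card {p : ℕ × ℕ // Odd p.1 ∧ Odd p.2 ∧ p.1 ^ 2 + (2*q) ^ 2 * p.2 ^ 2 = m} : ℤ), ?_, ?_⟩
  · ext m
    rw [two_mul, map_add, coeff_mk, thetaG, coeff_mk, card_S e q hq m]
    push_cast
    ring
  · ext n
    rw [PowerSeries.coeff_map, coeff_mk]
    have hqpow : 4 * q ^ 2 = 2 ^ (2 * e + 2) := by rw [hq]; ring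
    rw [show 4 * q ^ 2 + 1 = 2 ^ (2 * e + 2) + 1 by rw [hqpow], pow_add, pow_one,
      Fser_pow_pow, PowerSeries.coeff_mul]
    have hterm : ∀ p : ℕ × ℕ, p ∈ Finset.HasAntidiagonal.antidiagonal n →
        (coeff p.1) (PowerSeries.mk fun n =>
            if ∃ j : ℕ, Odd j ∧ 0 < j ∧ n = 2 ^ (2*e+2) * j ^ 2 then (1 : ZMod 2) else 0)
          * (coeff p.2) Fser
        = if (∃ j : ℕ, Odd j ∧ 0 < j ∧ p.1 = 2 ^ (2*e+2) * j ^ 2)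
            ∧ (∃ k : ℕ, Odd k ∧ 0 < k ∧ p.2 = k ^ 2) then 1 else 0 := by
      intro p _
      rw [coeff_mk, Fser, coeff_mk, ite_zero_mul_ite_zero, one_mul]
    rw [Finset.sum_congr rfl hterm, Finset.sum_boole]
    -- now both sides are casts of natural numbers; show the cardinalities agree
    have hcards : Nat.card {p : ℕ × ℕ // Odd p.1 ∧ Odd p.2 ∧ p.1 ^ 2 + (2*q) ^ 2 * p.2 ^ 2 = n}
        = ((Finset.HasAntidiagonal.antidiagonal n).filter (fun p =>
            (∃ j : ℕ, Odd j ∧ 0 < j ∧ p.1 = 2 ^ (2*e+2) * j ^ 2)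
            ∧ (∃ k : ℕ, Odd k ∧ 0 < k ∧ p.2 = k ^ 2))).card := by
      rw [← Nat.card_eq_finsetCard]
      apply Nat.card_congr
      refine Equiv.ofBijective (fun x => ⟨(2 ^ (2*e+2) * x.1.2 ^ 2, x.1.1 ^ 2), ?_⟩) ⟨?_, ?_⟩
      · obtain ⟨⟨a, b⟩, ha, hb, hab⟩ := x
        simp only [Finset.mem_filter, Finset.HasAntidiagonal.mem_antidiagonal]
        refine ⟨?_, ⟨b, hb, hb.pos, rfl⟩, ⟨a, ha, ha.pos, rfl⟩⟩
        rw [← hab, ← hqpow]; ring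
      · rintro ⟨⟨a, b⟩, ha, hb, hab⟩ ⟨⟨a', b'⟩, ha', hb', hab'⟩ hxy
        simp only [Subtype.mk.injEq, Prod.mk.injEq] at hxy
        obtain ⟨h1, h2⟩ := hxy
        have hbb : b = b' := by
          have := Nat.eq_of_mul_eq_mul_left (show 0 < 2 ^ (2*e+2) by positivity) h1
          exact Nat.pow_left_injective (by norm_num) this
        have haa : a = a' := Nat.pow_left_injective (by norm_num) h2
        exact Subtype.ext (Prod.ext haa hbb)
      · rintro ⟨⟨i, j⟩, hij⟩
        simp only [Finset.mem_filter, Finset.HasAntidiagonal.mem_antidiagonal] at hij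
        obtain ⟨hsum, ⟨jj, hjj, hjj0, hi⟩, ⟨kk, hkk, hkk0, hj⟩⟩ := hij
        refine ⟨⟨(kk, jj), hkk, hjj, ?_⟩, ?_⟩
        · rw [← hsum, hi, hj, ← hqpow]; ring
        · apply Subtype.ext
          simp only [Prod.mk.injEq]
          exact ⟨hi.symm, hj.symm⟩
    rw [hcards]
    push_cast
    rfl
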